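/- Let G be a geometric graph in which every two distinct crossings are vertex-disjoint (independent crossings). Then X(G) ≤ 3·χ(G), where χ(G) is the chromatic number of the underlying abstract graph. -/

import Mathlib

/-- An abstract geometric graph: a simple graph together with a symmetric
crossing relation on (unordered) edges such that crossing edges share no endpoint. -/
structure GeomGraph (V : Type*) where
  G : SimpleGraph V
  cross : Sym2 V → Sym2 V → Prop
  cross_symm : ∀ e₁ e₂, cross e₁ e₂ → cross e₂ e₁
  cross_mem : ∀ e₁ e₂, cross e₁ e₂ → e₁ ∈ G.edgeSet ∧ e₂ ∈ G.edgeSet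
  cross_disjoint : ∀ e₁ e₂, cross e₁ e₂ → ∀ v, v ∈ e₁ → v ∉ e₂

/-- A geometric homomorphism: preserves adjacency and crossings. -/
def IsGeomHom {V W : Type*} (A : GeomGraph V) (B : GeomGraph W) (f : V → W) : Prop :=
  (∀ u v, A.G.Adj u v → B.G.Adj (f u) (f v)) ∧
  ∀ e₁ e₂, A.cross e₁ e₂ → B.cross (Sym2.map f e₁) (Sym2.map f e₂)

/-- A geometric realization of the complete graph `K_n`: the complete graph on `Fin n`
together with the crossing relation induced by a straight-line drawing on `n` points
in general position in the plane. -/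
def IsRealizationOfK (n : ℕ) (K : GeomGraph (Fin n)) : Prop :=
  K.G = ⊤ ∧ ∃ p : Fin n → ℝ × ℝ,
    Function.Injective p ∧
    (∀ i j k : Fin n, i ≠ j → j ≠ k → i ≠ k →
      ¬ Collinear ℝ ({p i, p j, p k} : Set (ℝ × ℝ))) ∧
    ∀ a b c d : Fin n, a ≠ b → c ≠ d →
      (K.cross s(a, b) s(c, d) ↔
        a ≠ c ∧ a ≠ d ∧ b ≠ c ∧ b ≠ d ∧
          (openSegment ℝ (p a) (p b) ∩ openSegment ℝ (p c) (p d)).Nonempty)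

/-- The set of `n` such that there is a geometric homomorphism from `A` to some
geometric realization of `K_n`. -/
def geoSet {V : Type*} (A : GeomGraph V) : Set ℕ :=
  {n | ∃ K : GeomGraph (Fin n), IsRealizationOfK n K ∧ ∃ f : V → Fin n, IsGeomHom A K f}

/-- The geochromatic number `X(A)`. -/
noncomputable def geoChrom {V : Type*} (A : GeomGraph V) : ℕ := sInf (geoSet A)

/-- The set of `n` admitting a pseudo-geochromatic `n`-coloring. -/
def pseudoSet {V : Type*} (A : GeomGraph V) : Set ℕ :=
  {n | ∃ c : V → Fin n,
    (∀ u v, A.G.Adj u v → c u ≠ c v) ∧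
    ∀ a b x y : V, A.cross s(a, b) s(x, y) →
      c a ≠ c b ∧ c a ≠ c x ∧ c a ≠ c y ∧ c b ≠ c x ∧ c b ≠ c y ∧ c x ≠ c y}

/-- The pseudo-geochromatic number `X'(A)`. -/
noncomputable def pseudoChrom {V : Type*} (A : GeomGraph V) : ℕ := sInf (pseudoSet A)

/-- All distinct crossings of `A` are vertex-disjoint (independent crossings). -/
def IndepCrossings {V : Type*} (A : GeomGraph V) : Prop :=
  ∀ e₁ e₂ f₁ f₂, A.cross e₁ e₂ → A.cross f₁ f₂ →
    ¬ ((e₁ = f₁ ∧ e₂ = f₂) ∨ (e₁ = f₂ ∧ e₂ = f₁)) →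
    ∀ u, (u ∈ e₁ ∨ u ∈ e₂) → ¬ (u ∈ f₁ ∨ u ∈ f₂)

/-! ### Geometry of the parabola -/

lemma parabola_not_collinear (a b c : ℝ) (hab : a ≠ b) (hbc : b ≠ c) (hac : a ≠ c) :
    ¬ Collinear ℝ ({(a, a^2), (b, b^2), (c, c^2)} : Set (ℝ × ℝ)) := by
  intro h
  rw [collinear_iff_exists_forall_eq_smul_vadd] at h
  obtain ⟨p₀, v, hv⟩ := h
  obtain ⟨r₁, h₁⟩ := hv (a, a^2) (by simp)
  obtain ⟨r₂, h₂⟩ := hv (b, b^2) (by simp)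
  obtain ⟨r₃, h₃⟩ := hv (c, c^2) (by simp)
  rw [Prod.ext_iff] at h₁ h₂ h₃
  simp only [Prod.fst_vadd, Prod.snd_vadd, Prod.smul_fst, Prod.smul_snd, smul_eq_mul,
    vadd_eq_add, Prod.fst_add, Prod.snd_add] at h₁ h₂ h₃
  obtain ⟨h₁x, h₁y⟩ := h₁
  obtain ⟨h₂x, h₂y⟩ := h₂
  obtain ⟨h₃x, h₃y⟩ := h₃
  have key : (b - a) * (c^2 - a^2) = (c - a) * (b^2 - a^2) := by
    have e1 : b - a = (r₂ - r₁) * v.1 := by linear_combination h₂x - h₁x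
    have e2 : b^2 - a^2 = (r₂ - r₁) * v.2 := by linear_combination h₂y - h₁y
    have e3 : c - a = (r₃ - r₁) * v.1 := by linear_combination h₃x - h₁x
    have e4 : c^2 - a^2 = (r₃ - r₁) * v.2 := by linear_combination h₃y - h₁y
    rw [e1, e2, e3, e4]; ring
  have : (b - a) * (c - a) * (c - b) = 0 := by nlinarith [key]
  rcases mul_eq_zero.1 this with h | h
  · rcases mul_eq_zero.1 h with h | h
    · exact hab (by linarith)
    · exact hac (by linarith)
  · exact hbc (by linarith)

lemma mem_openSegment_parabola {s t x : ℝ} (h1 : s < x) (h2 : x < t) :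
    ((x, (s + t) * x - s * t) : ℝ × ℝ) ∈ openSegment ℝ ((s, s^2) : ℝ × ℝ) (t, t^2) := by
  have hst : t - s ≠ 0 := by intro h; linarith
  refine ⟨(t - x) / (t - s), (x - s) / (t - s),
    div_pos (by linarith) (by linarith), div_pos (by linarith) (by linarith), ?_, ?_⟩
  · field_simp; ring
  · rw [Prod.ext_iff]
    constructor
    · simp only [Prod.smul_fst, Prod.fst_add, smul_eq_mul]
      field_simp; ring
    · simp only [Prod.smul_snd, Prod.snd_add, smul_eq_mul]
      field_simp; ring

lemma parabola_chords_cross (a b c d : ℝ) (hab : a < b) (hbc : b < c) (hcd : c < d) :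
    (openSegment ℝ ((a, a^2) : ℝ × ℝ) (c, c^2) ∩
      openSegment ℝ ((b, b^2) : ℝ × ℝ) (d, d^2)).Nonempty := by
  have hD0 : (0:ℝ) < b + d - a - c := by linarith
  set x : ℝ := (b * d - a * c) / (b + d - a - c) with hx
  have hax : a < x := by
    rw [hx, lt_div_iff₀ hD0]
    nlinarith [mul_pos (sub_pos.2 hab) (sub_pos.2 (hab.trans (hbc.trans hcd)))]
  have hxc : x < c := by
    rw [hx, div_lt_iff₀ hD0]
    nlinarith [mul_pos (sub_pos.2 hcd) (sub_pos.2 hbc)]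
  have hbx : b < x := by
    rw [hx, lt_div_iff₀ hD0]
    nlinarith [mul_pos (sub_pos.2 hab) (sub_pos.2 hbc)]
  have hxd : x < d := by
    rw [hx, div_lt_iff₀ hD0]
    nlinarith [mul_pos (sub_pos.2 (hab.trans (hbc.trans hcd))) (sub_pos.2 hcd)]
  have hy2 : (a + c) * x - a * c = (b + d) * x - b * d := by
    rw [hx]; field_simp; ring
  refine ⟨(x, (a + c) * x - a * c), mem_openSegment_parabola hax hxc, ?_⟩
  rw [hy2]
  exact mem_openSegment_parabola hbx hxd

/-! ### The convex (parabola) realization of `K_n` -/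

/-- points on the parabola -/
def pPts (n : ℕ) : Fin n → ℝ × ℝ := fun i => ((i : ℕ), ((i : ℕ) : ℝ)^2)

/-- crossing relation of the parabola drawing -/
def crossRel (n : ℕ) (e₁ e₂ : Sym2 (Fin n)) : Prop :=
  ∃ a b c d : Fin n, e₁ = s(a, b) ∧ e₂ = s(c, d) ∧ a ≠ b ∧ c ≠ d ∧
    a ≠ c ∧ a ≠ d ∧ b ≠ c ∧ b ≠ d ∧
    (openSegment ℝ (pPts n a) (pPts n b) ∩ openSegment ℝ (pPts n c) (pPts n d)).Nonempty

def Kreal (n : ℕ) : GeomGraph (Fin n) where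
  G := ⊤
  cross := crossRel n
  cross_symm := by
    rintro e₁ e₂ ⟨a, b, c, d, h1, h2, hab, hcd, h3, h4, h5, h6, hseg⟩
    exact ⟨c, d, a, b, h2, h1, hcd, hab, h3.symm, h5.symm, h4.symm, h6.symm,
      by rwa [Set.inter_comm] at hseg⟩
  cross_mem := by
    rintro e₁ e₂ ⟨a, b, c, d, rfl, rfl, hab, hcd, h3, h4, h5, h6, hseg⟩
    constructor <;> simp [SimpleGraph.mem_edgeSet, hab, hcd]
  cross_disjoint := by
    rintro e₁ e₂ ⟨a, b, c, d, rfl, rfl, hab, hcd, h3, h4, h5, h6, hseg⟩ v hv hv'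
    rcases Sym2.mem_iff.1 hv with rfl | rfl <;>
      rcases Sym2.mem_iff.1 hv' with h | h <;> simp_all

lemma pPts_injective (n : ℕ) : Function.Injective (pPts n) := by
  intro i j h
  have : ((i : ℕ) : ℝ) = ((j : ℕ) : ℝ) := congrArg Prod.fst h
  have : (i : ℕ) = (j : ℕ) := Nat.cast_injective this
  exact Fin.ext this

lemma Kreal_isRealization (n : ℕ) : IsRealizationOfK n (Kreal n) := by
  refine ⟨rfl, pPts n, pPts_injective n, ?_, ?_⟩
  · intro i j k hij hjk hik
    apply parabola_not_collinear
    · exact fun h => hij (Fin.ext (Nat.cast_injective h))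
    · exact fun h => hjk (Fin.ext (Nat.cast_injective h))
    · exact fun h => hik (Fin.ext (Nat.cast_injective h))
  · intro a b c d hab hcd
    have segEq : ∀ u v u' v' : Fin n, s(u, v) = s(u', v') →
        openSegment ℝ (pPts n u) (pPts n v) = openSegment ℝ (pPts n u') (pPts n v') := by
      intro u v u' v' h
      rcases Sym2.eq_iff.1 h with ⟨rfl, rfl⟩ | ⟨rfl, rfl⟩
      · rfl
      · exact openSegment_symm ℝ _ _
    constructor
    · intro hcr
      have hd := (Kreal n).cross_disjoint _ _ hcr
      have hac : a ≠ c := fun h => hd a (Sym2.mem_mk_left a b) (h ▸ Sym2.mem_mk_left c d)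
      have had : a ≠ d := fun h => hd a (Sym2.mem_mk_left a b)
        (h ▸ Sym2.mem_mk_right c d)
      have hbc : b ≠ c := fun h => hd b (Sym2.mem_mk_right a b) (h ▸ Sym2.mem_mk_left c d)
      have hbd : b ≠ d := fun h => hd b (Sym2.mem_mk_right a b)
        (h ▸ Sym2.mem_mk_right c d)
      obtain ⟨a', b', c', d', h1, h2, hab', hcd', h3, h4, h5, h6, hseg⟩ := hcr
      refine ⟨hac, had, hbc, hbd, ?_⟩
      rw [segEq a b a' b' h1, segEq c d c' d' h2]
      exact hseg
    · rintro ⟨h3, h4, h5, h6, hseg⟩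
      exact ⟨a, b, c, d, rfl, rfl, hab, hcd, h3, h4, h5, h6, hseg⟩

lemma Kreal_cross_of {n : ℕ} {w x y z : Fin n}
    (h1 : (w : ℕ) < x) (h2 : (x : ℕ) < y) (h3 : (y : ℕ) < z) :
    (Kreal n).cross s(w, y) s(x, z) := by
  have hwx : w ≠ x := fun h => by simp [h] at h1
  have hxy : x ≠ y := fun h => by simp [h] at h2
  have hyz : y ≠ z := fun h => by simp [h] at h3
  have hwy : w ≠ y := fun h => by rw [h] at h1; omega
  have hwz : w ≠ z := fun h => by rw [h] at h1; omega
  have hxz : x ≠ z := fun h => by rw [h] at h2; omega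
  refine ⟨w, y, x, z, rfl, rfl, hwy, hxz, hwx, hwz, hxy.symm, hyz, ?_⟩
  apply parabola_chords_cross <;> exact_mod_cast ‹_›

lemma crossK {n : ℕ} (P Q R S : Fin n)
    (h : ((P:ℕ) < R ∧ (R:ℕ) < Q ∧ (Q:ℕ) < S) ∨ ((P:ℕ) < S ∧ (S:ℕ) < Q ∧ (Q:ℕ) < R) ∨
         ((Q:ℕ) < R ∧ (R:ℕ) < P ∧ (P:ℕ) < S) ∨ ((Q:ℕ) < S ∧ (S:ℕ) < P ∧ (P:ℕ) < R) ∨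
         ((R:ℕ) < P ∧ (P:ℕ) < S ∧ (S:ℕ) < Q) ∨ ((R:ℕ) < Q ∧ (Q:ℕ) < S ∧ (S:ℕ) < P) ∨
         ((S:ℕ) < P ∧ (P:ℕ) < R ∧ (R:ℕ) < Q) ∨ ((S:ℕ) < Q ∧ (Q:ℕ) < R ∧ (R:ℕ) < P)) :
    (Kreal n).cross s(P, Q) s(R, S) := by
  rcases h with ⟨h1,h2,h3⟩|⟨h1,h2,h3⟩|⟨h1,h2,h3⟩|⟨h1,h2,h3⟩|⟨h1,h2,h3⟩|⟨h1,h2,h3⟩|⟨h1,h2,h3⟩|⟨h1,h2,h3⟩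
  · exact Kreal_cross_of h1 h2 h3
  · rw [show s(R,S) = s(S,R) from Sym2.eq_swap]; exact Kreal_cross_of h1 h2 h3
  · rw [show s(P,Q) = s(Q,P) from Sym2.eq_swap]; exact Kreal_cross_of h1 h2 h3
  · rw [show s(P,Q) = s(Q,P) from Sym2.eq_swap, show s(R,S) = s(S,R) from Sym2.eq_swap]
    exact Kreal_cross_of h1 h2 h3
  · exact (Kreal n).cross_symm _ _ (Kreal_cross_of h1 h2 h3)
  · rw [show s(P,Q) = s(Q,P) from Sym2.eq_swap]
    exact (Kreal n).cross_symm _ _ (Kreal_cross_of h1 h2 h3)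
  · rw [show s(R,S) = s(S,R) from Sym2.eq_swap]
    exact (Kreal n).cross_symm _ _ (Kreal_cross_of h1 h2 h3)
  · rw [show s(P,Q) = s(Q,P) from Sym2.eq_swap, show s(R,S) = s(S,R) from Sym2.eq_swap]
    exact (Kreal n).cross_symm _ _ (Kreal_cross_of h1 h2 h3)

/-! ### The offset function -/

/-- The offset (round number) assigned to a vertex of a crossing: `cv` is the colour of
the vertex, `cu` the colour of the other endpoint of its edge, `m2, M2` the min/max colour
of the crossing edge, and `β` a tie-breaker. -/
def offs (cv cu m2 M2 : ℕ) (β : Prop) [Decidable β] : ℕ :=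
  if min cv cu < m2 ∨ (min cv cu = m2 ∧ β) then (if cv ≤ cu then 0 else 1)
  else if cu ≤ cv then 2 else if min cv cu < M2 then 1 else 0

lemma offs_le (cv cu m2 M2 : ℕ) (β : Prop) [Decidable β] : offs cv cu m2 M2 β ≤ 2 := by
  unfold offs; first | (split_ifs <;> omega) | omega

lemma offs_a {cv cu m2 : ℕ} (M2 : ℕ) {β : Prop} [Decidable β] (h : cv < cu)
    (hc : cv < m2 ∨ (cv = m2 ∧ β)) : offs cv cu m2 M2 β = 0 := by
  unfold offs
  rw [min_eq_left h.le, if_pos hc, if_pos h.le]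

lemma offs_b {cv cu m2 : ℕ} (M2 : ℕ) {β : Prop} [Decidable β] (h : cu < cv)
    (hc : cu < m2 ∨ (cu = m2 ∧ β)) : offs cv cu m2 M2 β = 1 := by
  unfold offs
  rw [min_eq_right h.le, if_pos hc, if_neg (Nat.not_le.2 h)]

lemma offs_x {cv cu m2 : ℕ} (M2 : ℕ) {β : Prop} [Decidable β] (h : cv < cu)
    (hc : ¬(cv < m2 ∨ (cv = m2 ∧ β))) :
    offs cv cu m2 M2 β = if cv < M2 then 1 else 0 := by
  unfold offs
  rw [min_eq_left h.le, if_neg hc, if_neg (Nat.not_le.2 h)]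

lemma offs_y {cv cu m2 : ℕ} (M2 : ℕ) {β : Prop} [Decidable β] (h : cu < cv)
    (hc : ¬(cu < m2 ∨ (cu = m2 ∧ β))) : offs cv cu m2 M2 β = 2 := by
  unfold offs
  rw [min_eq_right h.le, if_neg hc, if_pos h.le]

lemma second_resolve {x y : ℕ} {β1 β2 : Prop} (hβ : β1 ↔ ¬β2)
    (h : ¬(x < y ∨ (x = y ∧ β1))) : y < x ∨ (y = x ∧ β2) := by
  push_neg at h
  rcases Nat.lt_trichotomy x y with h' | h' | h'
  · omega
  · exact Or.inr ⟨h'.symm, by_contra fun hb => (h.2 h') (hβ.mpr hb)⟩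
  · exact Or.inl h'

lemma first_resolve {x y : ℕ} {β1 β2 : Prop} (hβ : β1 ↔ ¬β2)
    (h : x < y ∨ (x = y ∧ β1)) : ¬(y < x ∨ (y = x ∧ β2)) := by
  rintro (h' | ⟨h', hb⟩)
  · rcases h with h | ⟨h, _⟩ <;> omega
  · rcases h with h | ⟨h, hb1⟩
    · omega
    · exact (hβ.mp hb1) hb

lemma le_of_cond {x y : ℕ} {β : Prop} (h : x < y ∨ (x = y ∧ β)) : x ≤ y := by
  rcases h with h | ⟨h, _⟩ <;> omega

set_option maxHeartbeats 1000000 in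
lemma offs_main (k ca cb cx cy : ℕ) (hak : ca < k) (hbk : cb < k) (hxk : cx < k) (hyk : cy < k)
    (hab : ca ≠ cb) (hxy : cx ≠ cy) (b1 b2 : Prop) [Decidable b1] [Decidable b2]
    (hb : b1 ↔ ¬b2) :
    (offs ca cb (min cx cy) (max cx cy) b1 * k + ca <
        offs cx cy (min ca cb) (max ca cb) b2 * k + cx ∧
      offs cx cy (min ca cb) (max ca cb) b2 * k + cx <
        offs cb ca (min cx cy) (max cx cy) b1 * k + cb ∧
      offs cb ca (min cx cy) (max cx cy) b1 * k + cb <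
        offs cy cx (min ca cb) (max ca cb) b2 * k + cy) ∨
    (offs ca cb (min cx cy) (max cx cy) b1 * k + ca <
        offs cy cx (min ca cb) (max ca cb) b2 * k + cy ∧
      offs cy cx (min ca cb) (max ca cb) b2 * k + cy <
        offs cb ca (min cx cy) (max cx cy) b1 * k + cb ∧
      offs cb ca (min cx cy) (max cx cy) b1 * k + cb <
        offs cx cy (min ca cb) (max ca cb) b2 * k + cx) ∨
    (offs cb ca (min cx cy) (max cx cy) b1 * k + cb <
        offs cx cy (min ca cb) (max ca cb) b2 * k + cx ∧
      offs cx cy (min ca cb) (max ca cb) b2 * k + cx <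
        offs ca cb (min cx cy) (max cx cy) b1 * k + ca ∧
      offs ca cb (min cx cy) (max cx cy) b1 * k + ca <
        offs cy cx (min ca cb) (max ca cb) b2 * k + cy) ∨
    (offs cb ca (min cx cy) (max cx cy) b1 * k + cb <
        offs cy cx (min ca cb) (max ca cb) b2 * k + cy ∧
      offs cy cx (min ca cb) (max ca cb) b2 * k + cy <
        offs ca cb (min cx cy) (max cx cy) b1 * k + ca ∧
      offs ca cb (min cx cy) (max cx cy) b1 * k + ca <
        offs cx cy (min ca cb) (max ca cb) b2 * k + cx) ∨
    (offs cx cy (min ca cb) (max ca cb) b2 * k + cx <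
        offs ca cb (min cx cy) (max cx cy) b1 * k + ca ∧
      offs ca cb (min cx cy) (max cx cy) b1 * k + ca <
        offs cy cx (min ca cb) (max ca cb) b2 * k + cy ∧
      offs cy cx (min ca cb) (max ca cb) b2 * k + cy <
        offs cb ca (min cx cy) (max cx cy) b1 * k + cb) ∨
    (offs cx cy (min ca cb) (max ca cb) b2 * k + cx <
        offs cb ca (min cx cy) (max cx cy) b1 * k + cb ∧
      offs cb ca (min cx cy) (max cx cy) b1 * k + cb <
        offs cy cx (min ca cb) (max ca cb) b2 * k + cy ∧
      offs cy cx (min ca cb) (max ca cb) b2 * k + cy <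
        offs ca cb (min cx cy) (max cx cy) b1 * k + ca) ∨
    (offs cy cx (min ca cb) (max ca cb) b2 * k + cy <
        offs ca cb (min cx cy) (max cx cy) b1 * k + ca ∧
      offs ca cb (min cx cy) (max cx cy) b1 * k + ca <
        offs cx cy (min ca cb) (max ca cb) b2 * k + cx ∧
      offs cx cy (min ca cb) (max ca cb) b2 * k + cx <
        offs cb ca (min cx cy) (max cx cy) b1 * k + cb) ∨
    (offs cy cx (min ca cb) (max ca cb) b2 * k + cy <
        offs cb ca (min cx cy) (max cx cy) b1 * k + cb ∧
      offs cb ca (min cx cy) (max cx cy) b1 * k + cb <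
        offs cx cy (min ca cb) (max ca cb) b2 * k + cx ∧
      offs cx cy (min ca cb) (max ca cb) b2 * k + cx <
        offs ca cb (min cx cy) (max cx cy) b1 * k + ca) := by
  rcases hab.lt_or_gt with h1 | h1 <;> rcases hxy.lt_or_gt with h2 | h2 <;>
    [rw [min_eq_left h2.le, max_eq_right h2.le, min_eq_left h1.le, max_eq_right h1.le];
     rw [min_eq_right h2.le, max_eq_left h2.le, min_eq_left h1.le, max_eq_right h1.le];
     rw [min_eq_left h2.le, max_eq_right h2.le, min_eq_right h1.le, max_eq_left h1.le];
     rw [min_eq_right h2.le, max_eq_left h2.le, min_eq_right h1.le, max_eq_left h1.le]]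
  · by_cases hC : ca < cx ∨ (ca = cx ∧ b1)
    · have hC' := first_resolve hb hC
      have hle := le_of_cond hC
      rw [offs_a cy h1 hC, offs_b cy h1 hC, offs_x cb h2 hC', offs_y cb h2 hC']
      refine Or.inl ⟨?_, ?_, ?_⟩ <;> first | (split_ifs <;> omega) | omega
    · have hC' := second_resolve hb hC
      have hle := le_of_cond hC'
      rw [offs_x cy h1 hC, offs_y cy h1 hC, offs_a cb h2 hC', offs_b cb h2 hC']
      refine Or.inr (Or.inr (Or.inr (Or.inr (Or.inl ⟨?_, ?_, ?_⟩)))) <;> first | (split_ifs <;> omega) | omega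
  · by_cases hC : ca < cy ∨ (ca = cy ∧ b1)
    · have hC' := first_resolve hb hC
      have hle := le_of_cond hC
      rw [offs_a cx h1 hC, offs_b cx h1 hC, offs_x cb h2 hC', offs_y cb h2 hC']
      refine Or.inr (Or.inl ⟨?_, ?_, ?_⟩) <;> first | (split_ifs <;> omega) | omega
    · have hC' := second_resolve hb hC
      have hle := le_of_cond hC'
      rw [offs_x cx h1 hC, offs_y cx h1 hC, offs_a cb h2 hC', offs_b cb h2 hC']
      refine Or.inr (Or.inr (Or.inr (Or.inr (Or.inr (Or.inr (Or.inl ⟨?_, ?_, ?_⟩)))))) <;>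
        first | (split_ifs <;> omega) | omega
  · by_cases hC : cb < cx ∨ (cb = cx ∧ b1)
    · have hC' := first_resolve hb hC
      have hle := le_of_cond hC
      rw [offs_a cy h1 hC, offs_b cy h1 hC, offs_x ca h2 hC', offs_y ca h2 hC']
      refine Or.inr (Or.inr (Or.inl ⟨?_, ?_, ?_⟩)) <;> first | (split_ifs <;> omega) | omega
    · have hC' := second_resolve hb hC
      have hle := le_of_cond hC'
      rw [offs_x cy h1 hC, offs_y cy h1 hC, offs_a ca h2 hC', offs_b ca h2 hC']
      refine Or.inr (Or.inr (Or.inr (Or.inr (Or.inr (Or.inl ⟨?_, ?_, ?_⟩))))) <;>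
        first | (split_ifs <;> omega) | omega
  · by_cases hC : cb < cy ∨ (cb = cy ∧ b1)
    · have hC' := first_resolve hb hC
      have hle := le_of_cond hC
      rw [offs_a cx h1 hC, offs_b cx h1 hC, offs_x ca h2 hC', offs_y ca h2 hC']
      refine Or.inr (Or.inr (Or.inr (Or.inl ⟨?_, ?_, ?_⟩))) <;> first | (split_ifs <;> omega) | omega
    · have hC' := second_resolve hb hC
      have hle := le_of_cond hC'
      rw [offs_x cx h1 hC, offs_y cx h1 hC, offs_a ca h2 hC', offs_b ca h2 hC']
      refine Or.inr (Or.inr (Or.inr (Or.inr (Or.inr (Or.inr (Or.inr ⟨?_, ?_, ?_⟩)))))) <;>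
        first | (split_ifs <;> omega) | omega

/-! ### The vertex map -/

/-- min colour of an edge -/
def minS {k : ℕ} : Sym2 (Fin k) → ℕ :=
  Sym2.lift ⟨fun a b => min a.val b.val, fun a b => min_comm _ _⟩

/-- max colour of an edge -/
def maxS {k : ℕ} : Sym2 (Fin k) → ℕ :=
  Sym2.lift ⟨fun a b => max a.val b.val, fun a b => max_comm _ _⟩

@[simp] lemma minS_mk {k : ℕ} (a b : Fin k) : minS s(a, b) = min a.val b.val := rfl

@[simp] lemma maxS_mk {k : ℕ} (a b : Fin k) : maxS s(a, b) = max a.val b.val := rfl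

open Classical in
/-- The offset assigned to a vertex. -/
noncomputable def fmap {V : Type*} (A : GeomGraph V) (k : ℕ) (c : V → Fin k) (v : V) : ℕ :=
  if h : ∃ e₁ e₂, A.cross e₁ e₂ ∧ v ∈ e₁ then
    offs (c v).val (c (Sym2.Mem.other h.choose_spec.choose_spec.2)).val
      (minS (Sym2.map c h.choose_spec.choose)) (maxS (Sym2.map c h.choose_spec.choose))
      (embeddingToCardinal h.choose < embeddingToCardinal h.choose_spec.choose)
  else 0

lemma fmap_le {V : Type*} (A : GeomGraph V) (k : ℕ) (c : V → Fin k) (v : V) :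
    fmap A k c v ≤ 2 := by
  unfold fmap
  split
  · exact offs_le _ _ _ _ _
  · omega

open Classical in
lemma fmap_eq {V : Type*} (A : GeomGraph V) (hindep : IndepCrossings A) (k : ℕ)
    (c : V → Fin k) {a b : V} {E₂ : Sym2 V} (hcr : A.cross s(a, b) E₂) :
    fmap A k c a = offs (c a).val (c b).val (minS (Sym2.map c E₂)) (maxS (Sym2.map c E₂))
      (embeddingToCardinal s(a, b) < embeddingToCardinal E₂) := by
  have ha2 : a ∉ E₂ := A.cross_disjoint _ _ hcr a (Sym2.mem_mk_left a b)
  have h : ∃ e₁ e₂, A.cross e₁ e₂ ∧ a ∈ e₁ := ⟨_, _, hcr, Sym2.mem_mk_left a b⟩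
  unfold fmap
  rw [dif_pos h]
  have key : h.choose = s(a, b) ∧ h.choose_spec.choose = E₂ := by
    have halt : (h.choose = s(a, b) ∧ h.choose_spec.choose = E₂) ∨
        (h.choose = E₂ ∧ h.choose_spec.choose = s(a, b)) := by
      by_contra hn
      exact hindep _ _ _ _ h.choose_spec.choose_spec.1 hcr hn a
        (Or.inl h.choose_spec.choose_spec.2) (Or.inl (Sym2.mem_mk_left a b))
    rcases halt with hgood | ⟨hbad, _⟩
    · exact hgood
    · exact absurd (hbad ▸ h.choose_spec.choose_spec.2) ha2
  have hu : Sym2.Mem.other h.choose_spec.choose_spec.2 = b := by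
    exact Sym2.congr_right.mp ((Sym2.other_spec h.choose_spec.choose_spec.2).trans key.1)
  rw [hu, key.2, key.1]

/-- The vertex map into `Fin (3k)`. -/
noncomputable def ffun {V : Type*} (A : GeomGraph V) (k : ℕ) (c : V → Fin k) (v : V) :
    Fin (3 * k) :=
  ⟨fmap A k c v * k + (c v).val, by
    have h1 := Nat.mul_le_mul_right k (fmap_le A k c v)
    have h2 := (c v).isLt
    omega⟩

@[simp] lemma ffun_val {V : Type*} (A : GeomGraph V) (k : ℕ) (c : V → Fin k) (v : V) :
    ((ffun A k c v : Fin (3 * k)) : ℕ) = fmap A k c v * k + (c v).val := rfl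

/-! ### Main construction -/

lemma mem_geoSet {V : Type*} (A : GeomGraph V) (hindep : IndepCrossings A) {k : ℕ}
    (hcol : A.G.Colorable k) : 3 * k ∈ geoSet A := by
  classical
  obtain ⟨C⟩ := hcol
  set c : V → Fin k := (C : V → Fin k) with hc
  refine ⟨Kreal (3 * k), Kreal_isRealization (3 * k), ffun A k c, ?_, ?_⟩
  · intro u v huv
    have hne : fmap A k c u * k + (c u).val ≠ fmap A k c v * k + (c v).val := by
      have h1 := fmap_le A k c u
      have h2 := fmap_le A k c v
      have h3 := (c u).isLt
      have h4 := (c v).isLt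
      have h5 : (c u).val ≠ (c v).val := fun h => C.valid huv (Fin.ext h)
      have e1 : fmap A k c u = 0 ∨ fmap A k c u = 1 ∨ fmap A k c u = 2 := by omega
      have e2 : fmap A k c v = 0 ∨ fmap A k c v = 1 ∨ fmap A k c v = 2 := by omega
      rcases e1 with h | h | h <;> rcases e2 with h' | h' | h' <;> rw [h, h'] <;> omega
    show (⊤ : SimpleGraph (Fin (3 * k))).Adj _ _
    exact (SimpleGraph.top_adj _ _).mpr fun hEq => hne (congrArg Fin.val hEq)
  · intro e₁ e₂ hcr
    revert hcr
    induction e₁ using Sym2.ind with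
    | _ a b =>
    induction e₂ using Sym2.ind with
    | _ x y =>
    intro hcr
    have hadj1 : A.G.Adj a b := (A.G.mem_edgeSet).mp (A.cross_mem _ _ hcr).1
    have hadj2 : A.G.Adj x y := (A.G.mem_edgeSet).mp (A.cross_mem _ _ hcr).2
    have hdisj := A.cross_disjoint _ _ hcr
    have hcab : (c a).val ≠ (c b).val := fun h => C.valid hadj1 (Fin.ext h)
    have hcxy : (c x).val ≠ (c y).val := fun h => C.valid hadj2 (Fin.ext h)
    have hcr2 : A.cross s(b, a) s(x, y) := by
      rw [Sym2.eq_swap]; exact hcr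
    have hcrX : A.cross s(x, y) s(a, b) := A.cross_symm _ _ hcr
    have hcrY : A.cross s(y, x) s(a, b) := by
      rw [Sym2.eq_swap]; exact hcrX
    have hfa := fmap_eq A hindep k c hcr
    have hfb := fmap_eq A hindep k c hcr2
    have hfx := fmap_eq A hindep k c hcrX
    have hfy := fmap_eq A hindep k c hcrY
    rw [show s(b, a) = s(a, b) from Sym2.eq_swap] at hfb
    rw [show s(y, x) = s(x, y) from Sym2.eq_swap] at hfy
    simp only [Sym2.map_pair_eq, minS_mk, maxS_mk] at hfa hfb hfx hfy
    have hEne : s(a, b) ≠ s(x, y) := fun h =>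
      (hdisj a (Sym2.mem_mk_left a b)) (h ▸ Sym2.mem_mk_left a b)
    have hne' := embeddingToCardinal.injective.ne hEne
    have hβ : (embeddingToCardinal s(a, b) < embeddingToCardinal s(x, y)) ↔
        ¬(embeddingToCardinal s(x, y) < embeddingToCardinal s(a, b)) :=
      ⟨fun h => lt_asymm h, fun h => hne'.lt_or_gt.resolve_right h⟩
    have hmain := offs_main k (c a).val (c b).val (c x).val (c y).val
      (c a).isLt (c b).isLt (c x).isLt (c y).isLt hcab hcxy _ _ hβ
    rw [Sym2.map_pair_eq, Sym2.map_pair_eq]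
    apply crossK
    simp only [ffun_val]
    rw [hfa, hfb, hfx, hfy]
    exact hmain

/-- If `G` has independent crossings, then `X(G) ≤ 3 χ(G)`. -/
theorem geoChrom_le_three_mul_chromaticNumber {V : Type*} (A : GeomGraph V)
    (hindep : IndepCrossings A) :
    (geoChrom A : ℕ∞) ≤ 3 * A.G.chromaticNumber := by
  by_cases htop : A.G.chromaticNumber = ⊤
  · rw [htop]
    have h3 : (3 : ℕ∞) * ⊤ = ⊤ := by simp
    rw [h3]
    exact le_top
  · obtain ⟨m, hm⟩ := WithTop.ne_top_iff_exists.mp htop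
    have hcol : A.G.Colorable m :=
      SimpleGraph.chromaticNumber_le_iff_colorable.mp (le_of_eq hm.symm)
    have h1 : geoChrom A ≤ 3 * m := Nat.sInf_le (mem_geoSet A hindep hcol)
    have hm' : (m : ℕ∞) = A.G.chromaticNumber := by exact_mod_cast hm
    rw [← hm']
    have hcast : ((3 * m : ℕ) : ℕ∞) = 3 * (m : ℕ∞) := by push_cast; ring
    rw [← hcast]
    exact_mod_cast h1
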